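/- Let r ∈ (1, ∞), p ∈ (0, 1) and θ ∈ [0, ∞) be real numbers, and let f : 𝒜 → 𝒜 be a mapping satisfying f(r x) = r f(x) for all x ∈ 𝒜 and ‖r μ f((a+b)/r) + r μ f((a−b)/r) − 2 f(μ a) + f(c c* c) − f(c) c* c − c (f(c))* c − c c* f(c)‖ ≤ θ(‖a‖^p + ‖b‖^p + ‖c‖^p) for all μ ∈ 𝕋 and all a, b, c ∈ 𝒜. Then f is a J*-derivation on 𝒜. -/

import Mathlib

open ContinuousLinearMap Filter

variable {H K : Type*} [NormedAddCommGroup H] [InnerProductSpace ℂ H] [CompleteSpace H]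
  [NormedAddCommGroup K] [InnerProductSpace ℂ K] [CompleteSpace K]

/-- `𝒜` is closed under the `J*`-triple product `x ↦ x x* x`. -/
def JStarClosed (𝒜 : Submodule ℂ (H →L[ℂ] K)) : Prop :=
  ∀ x : H →L[ℂ] K, x ∈ 𝒜 → (x ∘L adjoint x) ∘L x ∈ 𝒜

/-- The triple product `c c* c` as an element of `𝒜`. -/
noncomputable def cube (𝒜 : Submodule ℂ (H →L[ℂ] K)) (hA : JStarClosed 𝒜) (c : 𝒜) : 𝒜 :=
  ⟨((c : H →L[ℂ] K) ∘L adjoint (c : H →L[ℂ] K)) ∘L (c : H →L[ℂ] K), hA c c.2⟩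

/-- `D : 𝒜 → 𝒜` is a `J*`-derivation: it is `ℂ`-linear and satisfies
`D(c c* c) = D(c) c* c + c (D(c))* c + c c* D(c)`. -/
noncomputable def IsJStarDerivation (𝒜 : Submodule ℂ (H →L[ℂ] K)) (hA : JStarClosed 𝒜)
    (D : 𝒜 → 𝒜) : Prop :=
  (∀ a b : 𝒜, D (a + b) = D a + D b) ∧
  (∀ (z : ℂ) (a : 𝒜), D (z • a) = z • D a) ∧
  (∀ c : 𝒜, (D (cube 𝒜 hA c) : H →L[ℂ] K) =
      ((D c : H →L[ℂ] K) ∘L adjoint (c : H →L[ℂ] K)) ∘L (c : H →L[ℂ] K) +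
      ((c : H →L[ℂ] K) ∘L adjoint (D c : H →L[ℂ] K)) ∘L (c : H →L[ℂ] K) +
      ((c : H →L[ℂ] K) ∘L adjoint (c : H →L[ℂ] K)) ∘L (D c : H →L[ℂ] K))

/-- The defect of the generalized Jensen functional equation combined with the
`J*`-derivation identity, for a map `f : 𝒜 → 𝒜`, parameter `r` and scalar `μ`. -/
noncomputable def jensenDefect (𝒜 : Submodule ℂ (H →L[ℂ] K)) (hA : JStarClosed 𝒜)
    (r : ℝ) (f : 𝒜 → 𝒜) (μ : ℂ) (a b c : 𝒜) : H →L[ℂ] K :=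
  ((r : ℂ) * μ) • (f ((r : ℂ)⁻¹ • (a + b)) : H →L[ℂ] K) +
  ((r : ℂ) * μ) • (f ((r : ℂ)⁻¹ • (a - b)) : H →L[ℂ] K) -
  (2 : ℂ) • (f (μ • a) : H →L[ℂ] K) +
  (f (cube 𝒜 hA c) : H →L[ℂ] K) -
  ((f c : H →L[ℂ] K) ∘L adjoint (c : H →L[ℂ] K)) ∘L (c : H →L[ℂ] K) -
  ((c : H →L[ℂ] K) ∘L adjoint (f c : H →L[ℂ] K)) ∘L (c : H →L[ℂ] K) -
  ((c : H →L[ℂ] K) ∘L adjoint (c : H →L[ℂ] K)) ∘L (f c : H →L[ℂ] K)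



private lemma aux_eq_zero {r p C x : ℝ} (hr : 1 < r) (hp1 : p < 1) (hx : 0 ≤ x)
    (h : ∀ n : ℕ, r ^ n * x ≤ C * (r ^ p) ^ n) : x = 0 := by
  have hr0 : (0:ℝ) < r := lt_trans one_pos hr
  set q := r ^ (p - 1) with hq
  have hq0 : 0 ≤ q := Real.rpow_nonneg hr0.le _
  have hq1 : q < 1 := Real.rpow_lt_one_of_one_lt_of_neg hr (by linarith)
  have hqr : r ^ p = q * r := by
    have h1 := (Real.rpow_add hr0 (p - 1) 1).symm
    rw [Real.rpow_one] at h1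
    rw [hq, h1]
    norm_num
  have key : ∀ n : ℕ, x ≤ C * q ^ n := by
    intro n
    have hrn : (0:ℝ) < r ^ n := pow_pos hr0 n
    have h2 : r ^ n * x ≤ C * q ^ n * r ^ n := by
      calc r ^ n * x ≤ C * (r ^ p) ^ n := h n
        _ = C * q ^ n * r ^ n := by rw [hqr, mul_pow]; ring
    exact (mul_le_mul_iff_of_pos_right hrn).mp (by linarith : x * r ^ n ≤ C * q ^ n * r ^ n)
  have htend : Tendsto (fun n : ℕ => C * q ^ n) atTop (nhds 0) := by
    simpa using tendsto_const_nhds.mul (tendsto_pow_atTop_nhds_zero_of_lt_one hq0 hq1)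
  have : x ≤ 0 := ge_of_tendsto' htend key
  linarith

private lemma linear_of_jensen {M : Type*} [AddCommGroup M] [Module ℂ M]
    (f : M → M) (hf0 : f 0 = 0)
    (hJA : ∀ μ : ℂ, ‖μ‖ = 1 → ∀ a b : M, μ • f (a+b) + μ • f (a-b) = (2:ℂ) • f (μ • a)) :
    (∀ a b : M, f (a+b) = f a + f b) ∧ ∀ (z : ℂ) (a : M), f (z • a) = z • f a := by
  have hE1 : ∀ a b : M, f (a+b) + f (a-b) = (2:ℂ) • f a := by
    intro a b
    have h := hJA 1 (by simp) a b
    simpa using h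
  have hdouble : ∀ a : M, f ((2:ℂ) • a) = (2:ℂ) • f a := by
    intro a
    have h := hE1 a a
    rw [sub_self, hf0, add_zero] at h
    rw [two_smul ℂ a]
    exact h
  have hadd : ∀ u v : M, f (u+v) = f u + f v := by
    intro u v
    have k := hE1 ((2:ℂ)⁻¹ • (u+v)) ((2:ℂ)⁻¹ • (u-v))
    have e1 : (2:ℂ)⁻¹ • (u+v) + (2:ℂ)⁻¹ • (u-v) = u := by module
    have e2 : (2:ℂ)⁻¹ • (u+v) - (2:ℂ)⁻¹ • (u-v) = v := by module
    rw [e1, e2] at k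
    have k3 : f (u+v) = (2:ℂ) • f ((2:ℂ)⁻¹ • (u+v)) := by
      conv_lhs => rw [← smul_inv_smul₀ (two_ne_zero (α := ℂ)) (u+v)]
      rw [hdouble]
    rw [k3]
    exact k.symm
  have hcancel2 : ∀ x y : M, (2:ℂ) • x = (2:ℂ) • y → x = y := fun x y h =>
    smul_right_injective _ (two_ne_zero (α := ℂ)) h
  have hunit : ∀ (μ:ℂ), ‖μ‖=1 → ∀ a : M, f (μ • a) = μ • f a := by
    intro μ hμ a
    have h := hJA μ hμ a 0
    rw [add_zero, sub_zero] at h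
    refine (hcancel2 _ _ ?_).symm
    rw [two_smul ℂ (μ • f a)]
    exact h
  have hnat : ∀ (n:ℕ) (a:M), f ((n:ℂ) • a) = (n:ℂ) • f a := by
    intro n
    induction n with
    | zero => intro a; simpa using hf0
    | succ n ih =>
      intro a
      have e : ((n+1 : ℕ):ℂ) • a = (n:ℂ) • a + a := by
        push_cast
        rw [add_smul, one_smul]
      rw [e, hadd, ih]
      push_cast
      rw [add_smul, one_smul]
  have hrealsmall : ∀ t : ℝ, |t| ≤ 1 → ∀ a : M, f ((t:ℂ) • a) = (t:ℂ) • f a := by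
    intro t ht a
    have ht2 : t^2 ≤ 1 := by nlinarith [abs_nonneg t, sq_abs t]
    set s := Real.sqrt (1 - t^2) with hs
    have hs2 : s^2 = 1 - t^2 := Real.sq_sqrt (by linarith)
    set μ : ℂ := (t:ℂ) + (s:ℂ) * Complex.I with hμdef
    set ν : ℂ := (t:ℂ) + ((-s:ℝ):ℂ) * Complex.I with hνdef
    have hnormμ : ‖μ‖ = 1 := by
      have h1 : Complex.normSq μ = 1 := by
        rw [hμdef, Complex.normSq_add_mul_I]
        linarith
      have h2 : ‖μ‖^2 = 1 := by rw [Complex.sq_norm, h1]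
      nlinarith [norm_nonneg μ]
    have hnormν : ‖ν‖ = 1 := by
      have h1 : Complex.normSq ν = 1 := by
        rw [hνdef, Complex.normSq_add_mul_I]
        nlinarith
      have h2 : ‖ν‖^2 = 1 := by rw [Complex.sq_norm, h1]
      nlinarith [norm_nonneg ν]
    have hμν : μ + ν = ((2*t : ℝ):ℂ) := by
      rw [hμdef, hνdef]
      push_cast
      ring
    have key : f (((2*t:ℝ):ℂ) • a) = ((2*t:ℝ):ℂ) • f a := by
      rw [← hμν, add_smul, hadd, hunit μ hnormμ, hunit ν hnormν, ← add_smul]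
    have e2 : ((2*t:ℝ):ℂ) • a = (2:ℂ) • ((t:ℂ) • a) := by
      rw [smul_smul]
      norm_num
    rw [e2, hdouble] at key
    refine hcancel2 _ _ ?_
    rw [key, smul_smul]
    congr 1
    push_cast
    ring
  have hreal : ∀ (t : ℝ) (a : M), f ((t:ℂ) • a) = (t:ℂ) • f a := by
    intro t a
    set n : ℕ := ⌊|t|⌋₊ + 1 with hn
    have hnt : |t| ≤ (n:ℝ) := by
      have h1 := Nat.lt_floor_add_one |t|
      rw [hn]
      push_cast
      linarith
    have hn0 : (0:ℝ) < (n:ℝ) := by positivity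
    have h1 : |t / (n:ℝ)| ≤ 1 := by
      rw [abs_div, abs_of_pos hn0]
      exact (div_le_one hn0).mpr hnt
    have hne : ((⌊|t|⌋₊:ℂ) + 1) ≠ 0 := Nat.cast_add_one_ne_zero _
    have e : (t:ℂ) • a = ((n:ℕ):ℂ) • (((t/(n:ℝ) : ℝ)):ℂ) • a := by
      rw [smul_smul]
      congr 1
      push_cast
      field_simp [show ((n:ℕ):ℂ) ≠ 0 by exact_mod_cast hn0.ne']
    rw [e, hnat, hrealsmall _ h1, smul_smul]
    congr 1
    push_cast
    field_simp [show ((n:ℕ):ℂ) ≠ 0 by exact_mod_cast hn0.ne']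
  refine ⟨hadd, ?_⟩
  intro z a
  have e : ((z.re:ℂ)) • a + ((z.im:ℂ)) • (Complex.I • a) = z • a := by
    rw [smul_smul, ← add_smul, Complex.re_add_im]
  rw [← e, hadd, hreal, hreal, hunit Complex.I (by simp) a, smul_smul, ← add_smul,
    Complex.re_add_im]

set_option maxHeartbeats 1600000 in
/-- Corollary 3.5 (superstability with power control): if `f(rx) = rf(x)` and the
Jensen/`J*` defect of `f` is bounded by `θ(‖a‖^p + ‖b‖^p + ‖c‖^p)` with `p ∈ (0,1)`,
then `f` is a `J*`-derivation. -/
theorem superstability_JStarDerivation_power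
    (𝒜 : Submodule ℂ (H →L[ℂ] K)) (hclosed : IsClosed (𝒜 : Set (H →L[ℂ] K)))
    (hA : JStarClosed 𝒜)
    (r : ℝ) (hr : 1 < r)
    (p θ : ℝ) (hp0 : 0 < p) (hp1 : p < 1) (hθ : 0 ≤ θ)
    (f : 𝒜 → 𝒜) (hfr : ∀ x : 𝒜, f ((r : ℂ) • x) = (r : ℂ) • f x)
    (hineq : ∀ (μ : ℂ), ‖μ‖ = 1 → ∀ a b c : 𝒜,
      ‖jensenDefect 𝒜 hA r f μ a b c‖ ≤ θ * (‖a‖ ^ p + ‖b‖ ^ p + ‖c‖ ^ p)) :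
    IsJStarDerivation 𝒜 hA f := by
  have hr0 : (0:ℝ) < r := lt_trans one_pos hr
  have hrC : (r:ℂ) ≠ 0 := by exact_mod_cast hr0.ne'
  have hf0 : f 0 = 0 := by
    have h := hfr 0
    rw [smul_zero] at h
    have h2 : ((r:ℂ) - 1) • f 0 = 0 := by
      rw [sub_smul (r:ℂ) 1 (f 0), one_smul, ← h, sub_self]
    rcases smul_eq_zero.mp h2 with h1 | h1
    · exfalso
      apply sub_ne_zero.mpr _ h1
      exact_mod_cast hr.ne'
    · exact h1
  have hfpow : ∀ (n : ℕ) (x : 𝒜), f ((r:ℂ) ^ n • x) = (r:ℂ) ^ n • f x := by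
    intro n
    induction n with
    | zero => intro x; simp
    | succ n ih =>
      intro x
      rw [pow_succ, mul_comm, mul_smul, hfr, ih, mul_smul]
  have hfinv : ∀ x : 𝒜, f ((r:ℂ)⁻¹ • x) = (r:ℂ)⁻¹ • f x := by
    intro x
    rw [eq_inv_smul_iff₀ hrC, ← hfr, smul_inv_smul₀ hrC]
  have hnorm_rpow : ∀ n : ℕ, ‖(r:ℂ) ^ n‖ = r ^ n := by
    intro n
    rw [norm_pow, Complex.norm_real, Real.norm_eq_abs, abs_of_pos hr0]
  have hcube0 : cube 𝒜 hA 0 = 0 := Subtype.ext (by simp [cube])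
  have hadj_smul : ∀ (z : ℂ) (T : H →L[ℂ] K), adjoint (z • T) = (starRingEnd ℂ) z • adjoint T := by
    intro z T
    exact map_smulₛₗ adjoint z T
  have hcube_smul : ∀ (z : ℂ) (c : 𝒜),
      cube 𝒜 hA (z • c) = (z * (starRingEnd ℂ) z * z) • cube 𝒜 hA c := by
    intro z c
    apply Subtype.ext
    simp only [cube, SetLike.val_smul, hadj_smul, smul_comp, comp_smul, smul_smul]
    ring_nf
  -- defect with c = 0
  have hdef0 : ∀ (μ : ℂ) (a b : 𝒜), jensenDefect 𝒜 hA r f μ a b 0 =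
      ((r:ℂ) * μ) • (f ((r:ℂ)⁻¹ • (a + b)) : H →L[ℂ] K) +
      ((r:ℂ) * μ) • (f ((r:ℂ)⁻¹ • (a - b)) : H →L[ℂ] K) -
      (2:ℂ) • (f (μ • a) : H →L[ℂ] K) := by
    intro μ a b
    simp [jensenDefect, hcube0, hf0]
  have hJscale : ∀ (μ : ℂ) (a b : 𝒜) (n : ℕ),
      jensenDefect 𝒜 hA r f μ ((r:ℂ)^n • a) ((r:ℂ)^n • b) 0
        = (r:ℂ)^n • jensenDefect 𝒜 hA r f μ a b 0 := by
    intro μ a b n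
    have e1 : (r:ℂ)^n • a + (r:ℂ)^n • b = (r:ℂ)^n • (a+b) := (smul_add _ _ _).symm
    have e2 : (r:ℂ)^n • a - (r:ℂ)^n • b = (r:ℂ)^n • (a-b) := (smul_sub _ _ _).symm
    rw [hdef0, hdef0, e1, e2, smul_comm ((r:ℂ)⁻¹), smul_comm ((r:ℂ)⁻¹),
      hfpow, hfpow, smul_comm μ, hfpow]
    simp only [Submodule.coe_smul]
    module
  have hnormA : ∀ (n : ℕ) (x : 𝒜), ‖((r:ℂ)^n • x : 𝒜)‖ = r^n * ‖x‖ := by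
    intro n x; show ‖(r:ℂ)^n • (x : H →L[ℂ] K)‖ = r^n * ‖(x : H →L[ℂ] K)‖; rw [norm_smul, hnorm_rpow]
  have hzero_rpow : (0:ℝ)^p = 0 := Real.zero_rpow hp0.ne'
  have hscale_rpow : ∀ (n:ℕ) (t:ℝ), 0 ≤ t → (r^n * t)^p = (r^p)^n * t^p := by
    intro n t ht
    rw [Real.mul_rpow (by positivity) ht]
    congr 1
    rw [← Real.rpow_natCast r n, ← Real.rpow_natCast (r^p) n, ← Real.rpow_mul hr0.le,
      ← Real.rpow_mul hr0.le, mul_comm]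
  have hJzero : ∀ (μ : ℂ), ‖μ‖ = 1 → ∀ a b : 𝒜, jensenDefect 𝒜 hA r f μ a b 0 = 0 := by
    intro μ hμ a b
    rw [← norm_eq_zero]
    refine aux_eq_zero hr hp1 (norm_nonneg _) (C := θ * (‖a‖^p + ‖b‖^p)) ?_
    intro n
    have h1 := hineq μ hμ ((r:ℂ)^n • a) ((r:ℂ)^n • b) 0
    rw [hJscale, norm_smul ((r:ℂ)^n) (jensenDefect 𝒜 hA r f μ a b 0), hnorm_rpow] at h1
    calc r^n * ‖jensenDefect 𝒜 hA r f μ a b 0‖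
        ≤ θ * (‖(r:ℂ)^n • a‖^p + ‖(r:ℂ)^n • b‖^p + ‖(0:𝒜)‖^p) := h1
      _ = θ * (‖a‖^p + ‖b‖^p) * (r^p)^n := by
          rw [hnormA, hnormA, hscale_rpow n _ (norm_nonneg a), hscale_rpow n _ (norm_nonneg b),
            (show ‖(0:𝒜)‖ = 0 from norm_zero), hzero_rpow]
          ring
  have hJA : ∀ (μ:ℂ), ‖μ‖=1 → ∀ a b : 𝒜, μ • f (a+b) + μ • f (a-b) = (2:ℂ) • f (μ • a) := by
    intro μ hμ a b
    have h := hJzero μ hμ a b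
    rw [hdef0, sub_eq_zero, hfinv, hfinv] at h
    have hcoef : (r:ℂ) * μ * (r:ℂ)⁻¹ = μ := by field_simp
    refine Subtype.coe_injective ?_
    simpa [smul_smul, hcoef] using h
  -- defect with a = b = 0, μ = 1
  have hdefc : ∀ c : 𝒜, jensenDefect 𝒜 hA r f 1 0 0 c =
      (f (cube 𝒜 hA c) : H →L[ℂ] K) -
      ((f c : H →L[ℂ] K) ∘L adjoint (c : H →L[ℂ] K)) ∘L (c : H →L[ℂ] K) -
      ((c : H →L[ℂ] K) ∘L adjoint (f c : H →L[ℂ] K)) ∘L (c : H →L[ℂ] K) -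
      ((c : H →L[ℂ] K) ∘L adjoint (c : H →L[ℂ] K)) ∘L (f c : H →L[ℂ] K) := by
    intro c
    simp [jensenDefect, hf0]
  have hstar : ∀ n : ℕ, (starRingEnd ℂ) ((r:ℂ)^n) = (r:ℂ)^n := by
    intro n; simp [map_pow, Complex.conj_ofReal]
  have hDscale : ∀ (c : 𝒜) (n : ℕ), jensenDefect 𝒜 hA r f 1 0 0 ((r:ℂ)^n • c)
      = ((r:ℂ)^n)^3 • jensenDefect 𝒜 hA r f 1 0 0 c := by
    intro c n
    rw [hdefc, hdefc, hcube_smul, hstar, mul_smul, mul_smul, hfpow, hfpow, hfpow, hfpow n c]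
    simp only [Submodule.coe_smul, hadj_smul, hstar, smul_comp, comp_smul, smul_smul]
    module
  have hDzero : ∀ c : 𝒜, jensenDefect 𝒜 hA r f 1 0 0 c = 0 := by
    intro c
    rw [← norm_eq_zero]
    refine aux_eq_zero hr hp1 (norm_nonneg _) (C := θ * ‖c‖^p) ?_
    intro n
    have h1 := hineq 1 (by simp) 0 0 ((r:ℂ)^n • c)
    rw [hDscale, norm_smul (((r:ℂ)^n)^3) (jensenDefect 𝒜 hA r f 1 0 0 c),
      norm_pow, hnorm_rpow] at h1
    have hrn1 : (1:ℝ) ≤ r^n := one_le_pow₀ hr.le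
    have hrn0 : (0:ℝ) ≤ r^n := by positivity
    have hle : r^n ≤ (r^n)^3 := by nlinarith [mul_le_mul hrn1 hrn1 zero_le_one hrn0]
    calc r^n * ‖jensenDefect 𝒜 hA r f 1 0 0 c‖
        ≤ (r^n)^3 * ‖jensenDefect 𝒜 hA r f 1 0 0 c‖ :=
          mul_le_mul_of_nonneg_right hle (norm_nonneg _)
      _ ≤ θ * (‖(0:𝒜)‖^p + ‖(0:𝒜)‖^p + ‖(r:ℂ)^n • c‖^p) := h1
      _ = θ * ‖c‖^p * (r^p)^n := by
          rw [hnormA, hscale_rpow n _ (norm_nonneg c), (show ‖(0:𝒜)‖ = 0 from norm_zero), hzero_rpow]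
          ring
  have hderiv : ∀ c : 𝒜, (f (cube 𝒜 hA c) : H →L[ℂ] K) =
      ((f c : H →L[ℂ] K) ∘L adjoint (c : H →L[ℂ] K)) ∘L (c : H →L[ℂ] K) +
      ((c : H →L[ℂ] K) ∘L adjoint (f c : H →L[ℂ] K)) ∘L (c : H →L[ℂ] K) +
      ((c : H →L[ℂ] K) ∘L adjoint (c : H →L[ℂ] K)) ∘L (f c : H →L[ℂ] K) := by
    intro c
    have h := hDzero c
    rw [hdefc, sub_sub, sub_sub, sub_eq_zero] at h
    rw [h]
    abel
  obtain ⟨hadd, hsmul⟩ := linear_of_jensen f hf0 hJA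
  exact ⟨hadd, hsmul, hderiv⟩
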